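/- arXiv:0906.2470 — 2 statements merged into one kernel-verified Lean document; each statement's English description precedes it below -/
import Mathlib

section
/- For every integer n ≥ 2, the terminating hypergeometric sum ₃F₂(1-n, 2-n, n-1; -n, -n; 1/2) = Σ_k ((1-n)_k (2-n)_k (n-1)_k)/((-n)_k (-n)_k k!) · (1/2)^k equals (2^(n-1)/n²) · (-1 + (2n-1)!!/(2^(n-2) (n-1)!)). -/
/-- Plane binary trees with ℕ-labeled leaves. -/
inductive BTree : Type
  | leaf : ℕ → BTree
  | node : BTree → BTree → BTree

namespace BTree

/-- Multiset of leaf labels. -/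
def leaves : BTree → Multiset ℕ
  | leaf i => {i}
  | node l r => leaves l + leaves r

/-- Depth of the leaf labeled `i` (junk if `i` is not a leaf label). -/
def dep : BTree → ℕ → ℕ
  | leaf _, _ => 0
  | node l r, i => if i ∈ leaves l then dep l i + 1 else dep r i + 1

/-- Path length (number of edges) between the leaves labeled `i` and `j`. -/
def dist : BTree → ℕ → ℕ → ℕ
  | leaf _, _, _ => 0
  | node l r, i, j =>
    if i ∈ leaves l ∧ j ∈ leaves l then dist l i j
    else if i ∈ leaves r ∧ j ∈ leaves r then dist r i j
    else (if i ∈ leaves l then dep l i + 1 else dep r i + 1)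
       + (if j ∈ leaves l then dep l j + 1 else dep r j + 1)

/-- Isomorphism of leaf-labeled binary trees: generated by swapping the two
children of any node, preserving leaf labels. -/
inductive Iso : BTree → BTree → Prop
  | leaf (i : ℕ) : Iso (leaf i) (leaf i)
  | node {l r l' r'} : Iso l l' → Iso r r' → Iso (node l r) (node l' r')
  | swap {l r l' r'} : Iso l r' → Iso r l' → Iso (node l r) (node l' r')

end BTree

/-- A valid fully resolved rooted phylogenetic tree on the leaf set {1,…,n}:
the multiset of leaf labels is exactly {1,…,n} (each label occurring once). -/
def BTree.valid (n : ℕ) (t : BTree) : Prop := t.leaves = (Finset.Icc 1 n).val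

/-- The type of fully resolved rooted phylogenetic trees on {1,…,n}, up to
label-preserving isomorphism. -/
def PhyloTree (n : ℕ) : Type :=
  Quot (fun a b : {t : BTree // t.valid n} => BTree.Iso a.1 b.1)

/-- The path length between leaves `i` and `j` of a phylogenetic tree,
computed on a representative. -/
noncomputable def pdist {n : ℕ} (T : PhyloTree n) (i j : ℕ) : ℕ :=
  BTree.dist T.out.1 i j

/-- Double factorial: `df n = n‼`. -/
def df : ℕ → ℕ
  | 0 => 1
  | 1 => 1
  | n + 2 => (n + 2) * df n

/-- Rising factorial (Pochhammer symbol) `(a)_k = a(a+1)⋯(a+k-1)`. -/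
def rf (a : ℝ) : ℕ → ℝ
  | 0 => 1
  | k + 1 => rf a k * (a + k)

lemma rf_zero (a : ℝ) : rf a 0 = 1 := rfl
lemma rf_succ (a : ℝ) (k : ℕ) : rf a (k + 1) = rf a k * (a + k) := rfl

lemma rf_nat_pos (a : ℕ) : ∀ k : ℕ,
    rf ((a : ℝ) + 1) k * (Nat.factorial a : ℝ) = (Nat.factorial (a + k) : ℝ)
  | 0 => by simp [rf_zero]
  | (k + 1) => by
      have ih := rf_nat_pos a k
      rw [rf_succ, show a + (k + 1) = (a + k) + 1 by ring, Nat.factorial_succ]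
      push_cast
      nlinarith [ih]

lemma rf_nat_neg (N : ℕ) : ∀ k : ℕ, k ≤ N →
    rf (-(N : ℝ)) k * (Nat.factorial (N - k) : ℝ) = (-1) ^ k * (Nat.factorial N : ℝ)
  | 0, _ => by simp [rf_zero]
  | (k + 1), h => by
      have hk : k ≤ N := by omega
      have ih := rf_nat_neg N k hk
      have hNk : N - k = (N - (k + 1)) + 1 := by omega
      have hd : ((N - k : ℕ) : ℝ) = (N : ℝ) - k := by
        push_cast [Nat.cast_sub hk]; ring
      have hfac : ((N - k).factorial : ℝ) = ((N - k : ℕ) : ℝ) * ((N - (k + 1)).factorial : ℝ) := by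
        rw [hNk, Nat.factorial_succ]; push_cast; ring
      rw [rf_succ, show -(N : ℝ) + k = -(((N - k : ℕ) : ℝ)) by rw [hd]; ring]
      rw [hfac] at ih
      rw [pow_succ]
      nlinarith [ih]

lemma rf_nat_neg' (N k : ℕ) (h : k ≤ N) :
    rf (-(N : ℝ)) k = (-1) ^ k * (Nat.factorial N : ℝ) / ((N - k).factorial : ℝ) := by
  rw [eq_div_iff (by exact_mod_cast Nat.factorial_ne_zero _)]
  exact rf_nat_neg N k h

lemma rf_nat_pos' (a k : ℕ) :
    rf ((a : ℝ) + 1) k = (Nat.factorial (a + k) : ℝ) / (Nat.factorial a : ℝ) := by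
  rw [eq_div_iff (by exact_mod_cast Nat.factorial_ne_zero _)]
  exact rf_nat_pos a k

open Finset in
lemma sum_u : ∀ m : ℕ, ∑ k ∈ Finset.range (m + 1), ((m + k).choose k : ℝ) / 2 ^ k = 2 ^ m
  | 0 => by simp
  | (m + 1) => by
      have ih := sum_u m
      have e0 : ∑ k ∈ range (m + 2), ((m + 1 + k).choose k : ℝ) / 2 ^ k
          = (∑ k ∈ range (m + 1), ((m + 1 + (k + 1)).choose (k + 1) : ℝ) / 2 ^ (k + 1)) + 1 := by
        rw [Finset.sum_range_succ' (fun k => ((m + 1 + k).choose k : ℝ) / 2 ^ k) (m + 1)]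
        simp
      have e1 : ∀ k : ℕ, ((m + 1 + (k + 1)).choose (k + 1) : ℝ) / 2 ^ (k + 1)
          = ((m + k + 1).choose (k + 1) : ℝ) / 2 ^ (k + 1)
            + (1 / 2) * (((m + 1 + k).choose k : ℝ) / 2 ^ k) := by
        intro k
        rw [show m + 1 + (k + 1) = (m + k + 1) + 1 by ring, Nat.choose_succ_succ]
        push_cast
        rw [show m + k + 1 = m + 1 + k by ring]
        field_simp
        ring
      have e2 : ∑ k ∈ range (m + 1), ((m + k + 1).choose (k + 1) : ℝ) / 2 ^ (k + 1)
          = 2 ^ m + ((2 * m + 1).choose (m + 1) : ℝ) / 2 ^ (m + 1) - 1 := by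
        have h := Finset.sum_range_succ' (fun k => ((m + k).choose k : ℝ) / 2 ^ k) (m + 1)
        have h2 := Finset.sum_range_succ (fun k => ((m + k).choose k : ℝ) / 2 ^ k) (m + 1)
        rw [h2, ih, show m + (m + 1) = 2 * m + 1 by ring] at h
        have : ∀ k : ℕ, ((m + (k + 1)).choose (k + 1) : ℝ) / 2 ^ (k + 1)
            = ((m + k + 1).choose (k + 1) : ℝ) / 2 ^ (k + 1) := by
          intro k; rw [show m + (k + 1) = m + k + 1 by ring]
        simp only [this] at h
        simp at h
        linarith [h]
      have hP : ((2 * m + 2).choose (m + 1) : ℝ) = 2 * ((2 * m + 1).choose (m + 1) : ℝ) := by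
        have hs : (2 * m + 1).choose m = (2 * m + 1).choose (m + 1) := by
          have := Nat.choose_symm (show m + 1 ≤ 2 * m + 1 by omega)
          rw [show 2 * m + 1 - (m + 1) = m by omega] at this
          exact this
        rw [show 2 * m + 2 = (2 * m + 1) + 1 by ring, Nat.choose_succ_succ, hs]
        push_cast; ring
      have e3 : ∑ k ∈ range (m + 2), ((m + 1 + k).choose k : ℝ) / 2 ^ k
          = (∑ k ∈ range (m + 1), ((m + 1 + k).choose k : ℝ) / 2 ^ k)
            + ((2 * m + 2).choose (m + 1) : ℝ) / 2 ^ (m + 1) := by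
        rw [Finset.sum_range_succ, show m + 1 + (m + 1) = 2 * m + 2 by ring]
      -- combine
      have e4 : ∑ k ∈ range (m + 2), ((m + 1 + k).choose k : ℝ) / 2 ^ k
          = (2 ^ m + ((2 * m + 1).choose (m + 1) : ℝ) / 2 ^ (m + 1) - 1)
            + (1 / 2) * (∑ k ∈ range (m + 1), ((m + 1 + k).choose k : ℝ) / 2 ^ k) + 1 := by
        rw [e0]
        rw [Finset.sum_congr rfl (fun k _ => e1 k), Finset.sum_add_distrib, e2, ← Finset.mul_sum]
      rw [e3] at e4
      rw [hP] at e3 e4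
      rw [e3]
      have hpow : (2:ℝ) ^ (m + 1) = 2 * 2 ^ m := by ring
      have hX : 2 * ((2 * m + 1).choose (m + 1) : ℝ) / 2 ^ (m + 1)
          = 2 * (((2 * m + 1).choose (m + 1) : ℝ) / 2 ^ (m + 1)) := by ring
      linarith [e4, hX]

open Finset in
lemma gosper (m : ℕ) :
    ∑ k ∈ Finset.range (m + 1),
        ((m + k).choose k : ℝ) / 2 ^ k * ((m + 2 - k : ℕ) : ℝ) ^ 2 * ((m + 1 - k : ℕ) : ℝ)
      = 2 * (2 * (m : ℝ) + 1) * (2 * (m : ℝ) + 3) * (((2 * m).choose m : ℝ)) / 2 ^ m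
        - (2 * (m : ℝ) + 2) * 2 ^ m := by
  set u : ℕ → ℝ := fun k => ((m + k).choose k : ℝ) / 2 ^ k with hu
  set g : ℕ → ℝ := fun k => 2 * (k : ℝ) ^ 3 - (4 * (m : ℝ) + 4) * (k : ℝ) ^ 2
      + (2 * (m : ℝ) ^ 2 + 12 * (m : ℝ) + 14) * (k : ℝ) with hg
  have hurec : ∀ k : ℕ, u (k + 1) = u k * ((m : ℝ) + k + 1) / (2 * ((k : ℝ) + 1)) := by
    intro k
    have h := Nat.add_one_mul_choose_eq (m + k) k
    have hc : ((m + k + 1).choose (k + 1) : ℝ) * ((k : ℝ) + 1)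
        = ((m : ℝ) + k + 1) * ((m + k).choose k : ℝ) := by
      exact_mod_cast congrArg (Nat.cast (R := ℝ)) h.symm
    simp only [hu]
    rw [show m + (k + 1) = (m + k) + 1 by ring]
    have h2 : (2 : ℝ) ^ (k + 1) = 2 ^ k * 2 := by ring
    field_simp
    linear_combination ((2:ℝ) * 2 ^ k) * hc
  have key : ∀ k : ℕ, u (k + 1) * g (k + 1) - u k * g k
      = u k * (((m : ℝ) + 2 - k) ^ 2 * ((m : ℝ) + 1 - k) + (2 * (m : ℝ) + 2)) := by
    intro k
    rw [hurec k]
    have hk1 : ((k : ℝ) + 1) ≠ 0 := by positivity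
    simp only [hg]
    push_cast
    field_simp
    ring
  have tele : ∑ k ∈ range (m + 1), (u (k + 1) * g (k + 1) - u k * g k)
      = u (m + 1) * g (m + 1) - u 0 * g 0 :=
    Finset.sum_range_sub (fun k => u k * g k) (m + 1)
  have hsum : ∑ k ∈ range (m + 1),
        u k * (((m : ℝ) + 2 - k) ^ 2 * ((m : ℝ) + 1 - k) + (2 * (m : ℝ) + 2))
      = u (m + 1) * g (m + 1) := by
    rw [← Finset.sum_congr rfl (fun k _ => key k), tele]
    simp [hg]
  have hsplit : ∑ k ∈ range (m + 1),
        u k * (((m : ℝ) + 2 - k) ^ 2 * ((m : ℝ) + 1 - k) + (2 * (m : ℝ) + 2))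
      = (∑ k ∈ range (m + 1), u k * (((m : ℝ) + 2 - k) ^ 2 * ((m : ℝ) + 1 - k)))
        + (2 * (m : ℝ) + 2) * 2 ^ m := by
    rw [← sum_u m, Finset.mul_sum, ← Finset.sum_add_distrib]
    exact Finset.sum_congr rfl (fun k _ => by simp only [hu]; ring)
  have hcast : ∀ k ∈ range (m + 1),
      u k * ((m + 2 - k : ℕ) : ℝ) ^ 2 * ((m + 1 - k : ℕ) : ℝ)
        = u k * (((m : ℝ) + 2 - k) ^ 2 * ((m : ℝ) + 1 - k)) := by
    intro k hk
    rw [Finset.mem_range] at hk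
    have h1 : ((m + 2 - k : ℕ) : ℝ) = (m : ℝ) + 2 - k := by
      rw [Nat.cast_sub (by omega)]; push_cast; ring
    have h2 : ((m + 1 - k : ℕ) : ℝ) = (m : ℝ) + 1 - k := by
      rw [Nat.cast_sub (by omega)]; push_cast; ring
    rw [h1, h2]; ring
  rw [Finset.sum_congr rfl hcast]
  have hfin : u (m + 1) * g (m + 1)
      = 2 * (2 * (m : ℝ) + 1) * (2 * (m : ℝ) + 3) * (((2 * m).choose m : ℝ)) / 2 ^ m := by
    have h := Nat.add_one_mul_choose_eq (2 * m) m
    have hc : ((2 * m + 1).choose (m + 1) : ℝ) * ((m : ℝ) + 1)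
        = (2 * (m : ℝ) + 1) * (((2 * m).choose m : ℝ)) := by
      exact_mod_cast congrArg (Nat.cast (R := ℝ)) h.symm
    simp only [hu, hg]
    rw [show m + (m + 1) = 2 * m + 1 by ring]
    push_cast
    have hm1 : ((m : ℝ) + 1) ≠ 0 := by positivity
    have h2 : (2 : ℝ) ^ (m + 1) = 2 ^ m * 2 := by ring
    rw [h2]
    field_simp
    linear_combination ((4:ℝ) * (2 * (m:ℝ) + 3)) * hc
  linear_combination hsum - hsplit + hfin

lemma df_eq : ∀ k : ℕ, df (2 * k + 1) * 2 ^ k * k.factorial = (2 * k + 1).factorial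
  | 0 => rfl
  | (k + 1) => by
      have ih := df_eq k
      rw [show 2 * (k + 1) + 1 = (2 * k + 1) + 2 by ring]
      show ((2 * k + 1) + 2) * df (2 * k + 1) * 2 ^ (k + 1) * (k + 1).factorial
        = ((2 * k + 1) + 2).factorial
      have h1 : ((2 * k + 1) + 2).factorial
          = ((2 * k + 1) + 2) * ((2 * k + 1) + 1) * (2 * k + 1).factorial := by
        rw [show (2 * k + 1) + 2 = ((2 * k + 1) + 1) + 1 by ring, Nat.factorial_succ,
          Nat.factorial_succ]
        ring
      rw [h1, ← ih, Nat.factorial_succ]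
      ring

lemma term_eq (m k : ℕ) (hk : k ≤ m) :
    rf (1 - ((m + 2 : ℕ) : ℝ)) k * rf (2 - ((m + 2 : ℕ) : ℝ)) k * rf (((m + 2 : ℕ) : ℝ) - 1) k /
        (rf (-((m + 2 : ℕ) : ℝ)) k * rf (-((m + 2 : ℕ) : ℝ)) k * (Nat.factorial k : ℝ)) *
        (1 / 2) ^ k
      = ((m + 1).factorial : ℝ) * (m.factorial : ℝ) / ((m + 2).factorial : ℝ) ^ 2 *
          (((m + k).choose k : ℝ) / 2 ^ k * ((m + 2 - k : ℕ) : ℝ) ^ 2 * ((m + 1 - k : ℕ) : ℝ)) := by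
  obtain ⟨j, rfl⟩ : ∃ j, m = k + j := ⟨m - k, by omega⟩
  rw [show (1 : ℝ) - ((k + j + 2 : ℕ) : ℝ) = -(((k + j + 1 : ℕ) : ℝ)) by push_cast; ring,
    show (2 : ℝ) - ((k + j + 2 : ℕ) : ℝ) = -(((k + j : ℕ) : ℝ)) by push_cast; ring,
    show ((k + j + 2 : ℕ) : ℝ) - 1 = ((k + j : ℕ) : ℝ) + 1 by push_cast; ring,
    rf_nat_neg' (k + j + 1) k (by omega), rf_nat_neg' (k + j) k (by omega),
    rf_nat_pos' (k + j) k, rf_nat_neg' (k + j + 2) k (by omega),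
    show k + j + 1 - k = j + 1 by omega, show k + j - k = j by omega,
    show k + j + 2 - k = j + 2 by omega]
  have hch : ((k + j + k).choose k : ℝ) * (k.factorial : ℝ) * ((k + j).factorial : ℝ)
      = ((k + j + k).factorial : ℝ) := by
    have h := Nat.choose_mul_factorial_mul_factorial (show k ≤ k + j + k by omega)
    rw [show k + j + k - k = k + j by omega] at h
    exact_mod_cast congrArg (Nat.cast (R := ℝ)) h
  have e1 : ((j + 1).factorial : ℝ) = ((j : ℝ) + 1) * (j.factorial : ℝ) := by
    rw [Nat.factorial_succ]; push_cast; ring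
  have e2 : ((j + 2).factorial : ℝ) = ((j : ℝ) + 2) * ((j + 1).factorial : ℝ) := by
    rw [show j + 2 = (j + 1) + 1 from rfl, Nat.factorial_succ]; push_cast; ring
  have e3 : ((k + j + 1).factorial : ℝ) = ((k : ℝ) + j + 1) * ((k + j).factorial : ℝ) := by
    rw [Nat.factorial_succ]; push_cast; ring
  have e4 : ((k + j + 2).factorial : ℝ) = ((k : ℝ) + j + 2) * ((k + j + 1).factorial : ℝ) := by
    rw [show k + j + 2 = (k + j + 1) + 1 from rfl, Nat.factorial_succ]; push_cast; ring
  rw [← hch, e4, e3, e2, e1]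
  have f1 : (j.factorial : ℝ) ≠ 0 := by exact_mod_cast Nat.factorial_ne_zero j
  have f2 : ((k + j).factorial : ℝ) ≠ 0 := by exact_mod_cast Nat.factorial_ne_zero (k + j)
  have f3 : (k.factorial : ℝ) ≠ 0 := by exact_mod_cast Nat.factorial_ne_zero k
  have f4 : (2 : ℝ) ^ k ≠ 0 := by positivity
  have f5 : ((-1 : ℝ)) ^ k ≠ 0 := by
    apply pow_ne_zero; norm_num
  have f6 : ((j : ℝ) + 1) ≠ 0 := by positivity
  have f7 : ((j : ℝ) + 2) ≠ 0 := by positivity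
  have f8 : ((k : ℝ) + j + 1) ≠ 0 := by positivity
  have f9 : ((k : ℝ) + j + 2) ≠ 0 := by positivity
  push_cast
  simp only [one_div, inv_pow]
  field_simp

/-- the terminating hypergeometric evaluation
₃F₂(1-n, 2-n, n-1; -n, -n; 1/2)
  = (2^(n-1)/n²)·(-1 + (2n-1)‼/(2^(n-2)(n-1)!)). -/
theorem stmt3 (n : ℕ) (hn : 2 ≤ n) :
    ∑ k ∈ Finset.range (n - 1),
        rf (1 - (n : ℝ)) k * rf (2 - (n : ℝ)) k * rf ((n : ℝ) - 1) k /
          (rf (-(n : ℝ)) k * rf (-(n : ℝ)) k * (Nat.factorial k : ℝ)) *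
          (1 / 2) ^ k
      = 2 ^ (n - 1) / (n : ℝ) ^ 2 *
          (-1 + (df (2 * n - 1) : ℝ) /
            (2 ^ (n - 2) * (Nat.factorial (n - 1) : ℝ))) := by
  obtain ⟨m, rfl⟩ : ∃ m, n = m + 2 := ⟨n - 2, by omega⟩
  rw [show m + 2 - 1 = m + 1 from rfl, show m + 2 - 2 = m from rfl,
    show 2 * (m + 2) - 1 = 2 * (m + 1) + 1 by omega]
  rw [Finset.sum_congr rfl (fun k hk => term_eq m k (by
    rw [Finset.mem_range] at hk; omega)), ← Finset.mul_sum, gosper m]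
  -- numeric identity
  have hdf : (df (2 * (m + 1) + 1) : ℝ) * 2 ^ (m + 1) * ((m + 1).factorial : ℝ)
      = ((2 * (m + 1) + 1).factorial : ℝ) := by
    exact_mod_cast congrArg (Nat.cast (R := ℝ)) (df_eq (m + 1))
  have hC : (((2 * m).choose m : ℝ)) * (m.factorial : ℝ) * (m.factorial : ℝ)
      = ((2 * m).factorial : ℝ) := by
    have h := Nat.choose_mul_factorial_mul_factorial (show m ≤ 2 * m by omega)
    rw [show 2 * m - m = m by omega] at h
    exact_mod_cast congrArg (Nat.cast (R := ℝ)) h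
  have e1 : ((m + 1).factorial : ℝ) = ((m : ℝ) + 1) * (m.factorial : ℝ) := by
    rw [Nat.factorial_succ]; push_cast; ring
  have e2 : ((m + 2).factorial : ℝ) = ((m : ℝ) + 2) * ((m + 1).factorial : ℝ) := by
    rw [show m + 2 = (m + 1) + 1 from rfl, Nat.factorial_succ]; push_cast; ring
  have e3 : ((2 * (m + 1) + 1).factorial : ℝ)
      = (2 * (m : ℝ) + 3) * (2 * (m : ℝ) + 2) * (2 * (m : ℝ) + 1) * ((2 * m).factorial : ℝ) := by
    rw [show 2 * (m + 1) + 1 = ((2 * m + 1) + 1) + 1 by ring, Nat.factorial_succ,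
      Nat.factorial_succ, Nat.factorial_succ]
    push_cast; ring
  have hdf' : (df (2 * (m + 1) + 1) : ℝ)
      = (2 * (m : ℝ) + 3) * (2 * (m : ℝ) + 2) * (2 * (m : ℝ) + 1) * ((2 * m).factorial : ℝ)
        / (2 ^ (m + 1) * ((m + 1).factorial : ℝ)) := by
    rw [eq_div_iff (by positivity)]
    rw [← e3, ← hdf]; ring
  have hC' : (((2 * m).choose m : ℝ)) = ((2 * m).factorial : ℝ) / ((m.factorial : ℝ) * (m.factorial : ℝ)) := by
    rw [eq_div_iff (by positivity)]
    rw [← hC]; ring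
  rw [hdf', hC', e2, e1]
  have f1 : (m.factorial : ℝ) ≠ 0 := by exact_mod_cast Nat.factorial_ne_zero m
  have f2 : (2 : ℝ) ^ m ≠ 0 := by positivity
  have f3 : ((m : ℝ) + 1) ≠ 0 := by positivity
  have f4 : ((m : ℝ) + 2) ≠ 0 := by positivity
  push_cast
  field_simp
  ring
end

section
/- For every integer n ≥ 2, Σ_{i=2}^{n} i² · (i-1) · (2n-i-2)! / (2(n-i))!! = 2·(2n-1)!! − (2n-2)!!. -/
lemma df_succ_succ (n : ℕ) : df (n+2) = (n+2) * df n := rfl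

lemma df_two_mul (k : ℕ) : df (2*k) = 2^k * k.factorial := by
  induction k with
  | zero => rfl
  | succ k ih =>
    rw [show 2*(k+1) = 2*k+2 by ring, df_succ_succ, ih, Nat.factorial_succ]
    ring

lemma df_ne_zero (n : ℕ) : df n ≠ 0 := by
  induction n using df.induct with
  | case1 => simp [df]
  | case2 => simp [df]
  | case3 n ih => simp [df_succ_succ]; exact ih

lemma fact_odd_df (k : ℕ) : Nat.factorial (2*k+1) = df (2*k+1) * df (2*k) := by
  induction k with
  | zero => rfl
  | succ k ih =>
    rw [show 2*(k+1)+1 = (2*k+1)+2 by ring, df_succ_succ, show (2*k+1)+2 = 2*k+3 by ring]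
    rw [show 2*(k+1) = 2*k+2 by ring, df_succ_succ]
    rw [show (2*k+3) = (2*k+2)+1 by ring, Nat.factorial_succ, show (2*k+2) = (2*k+1)+1 by ring,
      Nat.factorial_succ, ih]
    ring

lemma binom_sum (m : ℕ) :
    ∑ j ∈ Finset.range (m+1), (m+j).choose j * 2^(m-j) = 4^m := by
  induction m with
  | zero => simp
  | succ m ih =>
    set T := ∑ j ∈ Finset.range (m+1), (m+j).choose j * 2^(m-j) with hT
    set U := ∑ k ∈ Finset.range (m+1), (m+1+k).choose k * 2^(m-k) with hU
    set Y := ∑ k ∈ Finset.range m, (m+(k+1)).choose (k+1) * 2^(m-(k+1)) with hY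
    set W := ∑ k ∈ Finset.range (m+1), (m+(k+1)).choose (k+1) * 2^(m-k) with hW
    have hTm : T = Y + 2^m := by
      rw [hT, Finset.sum_range_succ']
      simp [hY]
    have hWY : W = 2*Y + (2*m+1).choose (m+1) := by
      rw [hW, Finset.sum_range_succ, show m+(m+1) = 2*m+1 by ring, Nat.sub_self, pow_zero,
        mul_one, Finset.mul_sum]
      congr 1
      refine Finset.sum_congr rfl fun k hk => ?_
      have hk' : k < m := Finset.mem_range.mp hk
      rw [show m - k = (m-(k+1))+1 by omega, pow_succ]
      ring
    have eq_a : ∑ j ∈ Finset.range (m+2), (m+1+j).choose j * 2^(m+1-j)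
        = U + W + 2^(m+1) := by
      rw [Finset.sum_range_succ']
      simp only [Nat.choose_zero_right, one_mul, Nat.sub_zero]
      congr 1
      have : ∀ k ∈ Finset.range (m+1),
          (m+1+(k+1)).choose (k+1) * 2^(m+1-(k+1))
            = (m+1+k).choose k * 2^(m-k) + (m+(k+1)).choose (k+1) * 2^(m-k) := by
        intro k hk
        rw [show m+1+(k+1) = (m+1+k)+1 by ring, Nat.choose_succ_succ,
          show m+1-(k+1) = m-k by omega, show m+1+k = m+(k+1) by ring, add_mul]
      rw [Finset.sum_congr rfl this, Finset.sum_add_distrib]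
    have eq_b : ∑ j ∈ Finset.range (m+2), (m+1+j).choose j * 2^(m+1-j)
        = 2*U + (2*m+2).choose (m+1) := by
      rw [Finset.sum_range_succ, show m+1+(m+1) = 2*m+2 by ring, Nat.sub_self, pow_zero,
        mul_one, Finset.mul_sum]
      congr 1
      refine Finset.sum_congr rfl fun k hk => ?_
      have hk' : k < m+1 := Finset.mem_range.mp hk
      rw [show m+1-k = (m-k)+1 by omega, pow_succ]
      ring
    have pascal2 : (2*m+2).choose (m+1) = 2 * ((2*m+1).choose (m+1)) := by
      rw [show 2*m+2 = (2*m+1)+1 by ring, Nat.choose_succ_succ']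
      have : (2*m+1).choose m = (2*m+1).choose (m+1) := by
        rw [← Nat.choose_symm (by omega : m+1 ≤ 2*m+1), show 2*m+1-(m+1) = m by omega]
      omega
    have : ∑ j ∈ Finset.range (m+2), (m+1+j).choose j * 2^(m+1-j) = 4 * T := by omega
    rw [this, ih]; ring

lemma sumF (m : ℕ) :
    ∑ j ∈ Finset.range (m+1), ((m+j).factorial : ℝ) / (df (2*j) : ℝ)
      = (df (2*m) : ℝ) := by
  have key : ∀ j ∈ Finset.range (m+1),
      ((m+j).factorial : ℝ) / (df (2*j) : ℝ)
        = ((m.factorial : ℝ) / 2^m) * (((m+j).choose j * 2^(m-j) : ℕ) : ℝ) := by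
    intro j hj
    have hj' : j ≤ m := by have := Finset.mem_range.mp hj; omega
    have hfac : (m+j).choose j * j.factorial * m.factorial = (m+j).factorial := by
      have := Nat.choose_mul_factorial_mul_factorial (show j ≤ m+j by omega)
      simpa [Nat.add_sub_cancel] using this
    have hpow : (2:ℕ)^(m-j) * 2^j = 2^m := by
      rw [← pow_add]; congr 1; omega
    have hnat : m.factorial * ((m+j).choose j * 2^(m-j)) * (2^j * j.factorial)
        = (m+j).factorial * 2^m := by
      calc m.factorial * ((m+j).choose j * 2^(m-j)) * (2^j * j.factorial)
          = ((m+j).choose j * j.factorial * m.factorial) * (2^(m-j) * 2^j) := by ring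
        _ = (m+j).factorial * 2^m := by rw [hfac, hpow]
    rw [df_two_mul, div_mul_eq_mul_div, div_eq_div_iff (by positivity) (by positivity)]
    exact_mod_cast hnat.symm
  rw [Finset.sum_congr rfl key, ← Finset.mul_sum, ← Nat.cast_sum, binom_sum, df_two_mul]
  have : ((4:ℝ))^m = 2^m * 2^m := by rw [← mul_pow]; norm_num
  push_cast [this]
  field_simp

lemma sumL (m : ℕ) :
    ∑ j ∈ Finset.range (m+1),
        ((m:ℝ)+2-j)^2 * ((m:ℝ)+1-j) * ((m+j).factorial : ℝ) / (df (2*j) : ℝ)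
      = 2 * (df (2*m+3) : ℝ) - (df (2*m+2) : ℝ) := by
  set H : ℕ → ℝ := fun j => match j with
    | 0 => 0
    | k+1 => ((m:ℝ)^2+4*m+6+(k:ℝ)^2-2*m*k) * ((m+1+k).factorial : ℝ) / (df (2*k) : ℝ)
    with hH
  have key : ∀ j ∈ Finset.range (m+1),
      ((m:ℝ)+2-j)^2 * ((m:ℝ)+1-j) * ((m+j).factorial : ℝ) / (df (2*j) : ℝ)
        = (H (j+1) - H j)
          - (2*(m:ℝ)+2) * (((m+j).factorial : ℝ) / (df (2*j) : ℝ)) := by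
    intro j _
    match j with
    | 0 =>
      simp only [hH]
      have h1 : (df 0 : ℝ) = 1 := by norm_num [df]
      have h2 : ((m+1).factorial : ℝ) = ((m:ℝ)+1) * (m.factorial : ℝ) := by
        rw [Nat.factorial_succ]; push_cast; ring
      simp only [Nat.mul_zero, Nat.add_zero, h1, Nat.cast_zero, h2]
      ring
    | k+1 =>
      simp only [hH]
      have hdf : (df (2*(k+1)) : ℝ) = (2*(k:ℝ)+2) * (df (2*k) : ℝ) := by
        rw [show 2*(k+1) = 2*k+2 by ring, df_succ_succ]; push_cast; ring
      have hf1 : ((m+(k+1)).factorial : ℝ) = ((m+1+k).factorial : ℝ) := by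
        norm_num [show m+(k+1) = m+1+k by ring]
      have hf2 : ((m+1+(k+1)).factorial : ℝ)
          = ((m:ℝ)+(k:ℝ)+2) * ((m+1+k).factorial : ℝ) := by
        rw [show m+1+(k+1) = (m+1+k)+1 by ring, Nat.factorial_succ]; push_cast; ring
      have hdf0 : (df (2*k) : ℝ) ≠ 0 := Nat.cast_ne_zero.mpr (df_ne_zero _)
      rw [hdf, hf1, hf2]
      push_cast
      field_simp
      ring
  rw [Finset.sum_congr rfl key, Finset.sum_sub_distrib, Finset.sum_range_sub,
    ← Finset.mul_sum, sumF]
  simp only [hH]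
  have h1 : ((m+1+m).factorial : ℝ) = ((2*m+1).factorial : ℝ) := by
    norm_num [show m+1+m = 2*m+1 by ring]
  have h2 : (df (2*m+3) : ℝ) = (2*(m:ℝ)+3) * (df (2*m+1) : ℝ) := by
    rw [show 2*m+3 = (2*m+1)+2 by ring, df_succ_succ]; push_cast; ring
  have h3 : (df (2*m+2) : ℝ) = (2*(m:ℝ)+2) * (df (2*m) : ℝ) := by
    rw [show 2*m+2 = (2*m)+2 by ring, df_succ_succ]; push_cast; ring
  have h4 : ((2*m+1).factorial : ℝ) = (df (2*m+1) : ℝ) * (df (2*m) : ℝ) := by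
    rw [fact_odd_df]; push_cast; ring
  have hdf0 : (df (2*m) : ℝ) ≠ 0 := Nat.cast_ne_zero.mpr (df_ne_zero _)
  rw [h1, h2, h3, h4]
  field_simp
  ring

/-- Σ_{i=2}^{n} i²(i-1)(2n-i-2)!/(2(n-i))‼ = 2·(2n-1)‼ − (2n-2)‼. -/
theorem stmt8 (n : ℕ) (hn : 2 ≤ n) :
    ∑ i ∈ Finset.Icc 2 n,
        (i : ℝ) ^ 2 * ((i : ℝ) - 1) * (Nat.factorial (2 * n - i - 2) : ℝ) /
          (df (2 * (n - i)) : ℝ)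
      = 2 * (df (2 * n - 1) : ℝ) - (df (2 * n - 2) : ℝ) := by
  obtain ⟨m, rfl⟩ : ∃ m, n = m + 2 := ⟨n - 2, by omega⟩
  rw [show 2*(m+2)-1 = 2*m+3 from by omega, show 2*(m+2)-2 = 2*m+2 from by omega, ← sumL m]
  refine Finset.sum_nbij' (i := fun i => m+2-i) (j := fun j => m+2-j) ?_ ?_ ?_ ?_ ?_
  · intro a ha
    simp only [Finset.mem_Icc] at ha
    simp only [Finset.mem_range]
    omega
  · intro a ha
    simp only [Finset.mem_range] at ha
    simp only [Finset.mem_Icc]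
    omega
  · intro a ha
    simp only [Finset.mem_Icc] at ha
    show m+2-(m+2-a) = a
    omega
  · intro a ha
    simp only [Finset.mem_range] at ha
    show m+2-(m+2-a) = a
    omega
  · intro i hi
    obtain ⟨h2, hub⟩ := Finset.mem_Icc.mp hi
    have e1 : 2*(m+2)-i-2 = m+(m+2-i) := by omega
    have e2 : ((m+2-i : ℕ) : ℝ) = (m:ℝ)+2-(i:ℝ) := by
      push_cast [Nat.cast_sub hub]
      ring
    rw [e1]
    simp only [e2]
    ring
end
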